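/- arXiv:0812.1745 — 2 statements merged into one kernel-verified Lean document; each statement's English description precedes it below -/
import Mathlib

section
/- The measure μ_R on (0,1) with density 1/x with respect to Lebesgue measure is invariant under the Renyi map: for every Borel set A ⊆ (0,1), μ_R(R⁻¹A) = μ_R(A). Moreover μ_R is σ-finite but infinite (μ_R((0,1)) = ∞). -/
open MeasureTheory Set
open scoped ENNReal

/-- The Renyi map `R(x) = 1/(1-x) - ⌊1/(1-x)⌋`. -/
noncomputable def renyiMap (x : ℝ) : ℝ := 1 / (1 - x) - ⌊1 / (1 - x)⌋

/-- The measure on `(0,1)` with density `1/x` with respect to Lebesgue measure. -/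
noncomputable def muRenyi : Measure ℝ :=
  (volume.restrict (Set.Ioo (0:ℝ) 1)).withDensity (fun x => ENNReal.ofReal (1 / x))

lemma lintegral_image_1d {s : Set ℝ} {f f' : ℝ → ℝ} (hs : MeasurableSet s)
    (hf' : ∀ x ∈ s, HasDerivWithinAt f (f' x) s x) (hf : Set.InjOn f s) (g : ℝ → ℝ≥0∞) :
    ∫⁻ x in f '' s, g x = ∫⁻ x in s, ENNReal.ofReal |f' x| * g (f x) := by
  simpa only [ContinuousLinearMap.det_toSpanSingleton] using
    lintegral_image_eq_lintegral_abs_det_fderiv_mul volume hs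
      (fun x hx => (hf' x hx).hasFDerivWithinAt) hf g

lemma measurable_image_1d {s : Set ℝ} {f f' : ℝ → ℝ} (hs : MeasurableSet s)
    (hf' : ∀ x ∈ s, HasDerivWithinAt f (f' x) s x) (hf : Set.InjOn f s) :
    MeasurableSet (f '' s) :=
  measurable_image_of_fderivWithin hs (fun x hx => (hf' x hx).hasFDerivWithinAt) hf

lemma renyi_tsum (y : ℝ) (hy : 0 < y) :
    ∑' n : ℕ, ENNReal.ofReal (1 / ((y + n) * (y + n + 1))) = ENNReal.ofReal (1 / y) := by
  have hnn : ∀ n : ℕ, 0 ≤ 1 / ((y + (n:ℝ)) * (y + n + 1)) := by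
    intro n; positivity
  have hsum : HasSum (fun n : ℕ => 1 / ((y + (n:ℝ)) * (y + n + 1))) (1 / y) := by
    rw [hasSum_iff_tendsto_nat_of_nonneg hnn]
    have hps : ∀ N : ℕ, ∑ i ∈ Finset.range N, 1 / ((y + (i:ℝ)) * (y + i + 1))
        = 1 / y - 1 / (y + N) := by
      intro N
      have h := Finset.sum_range_sub' (fun i : ℕ => 1 / (y + (i:ℝ))) N
      simp only [Nat.cast_zero, add_zero] at h
      rw [← h]
      apply Finset.sum_congr rfl
      intro i _
      have h1 : (0:ℝ) < y + i := by positivity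
      have h2 : (0:ℝ) < y + i + 1 := by positivity
      push_cast
      rw [show y + ((i:ℝ) + 1) = y + i + 1 by ring, div_sub_div _ _ h1.ne' h2.ne']
      norm_num
    simp only [hps]
    have h0 : Filter.Tendsto (fun N : ℕ => 1 / (y + (N:ℝ))) Filter.atTop (nhds 0) := by
      have := (tendsto_inv_atTop_zero.comp
        (Filter.tendsto_atTop_add_const_left _ y tendsto_natCast_atTop_atTop))
      simpa [Function.comp_def, one_div] using this
    simpa using (tendsto_const_nhds.sub h0)
  rw [← hsum.tsum_eq, ← ENNReal.ofReal_tsum_of_nonneg hnn hsum.summable]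

lemma renyi_image_subset {A : Set ℝ} (hA : A ⊆ Set.Ioo (0:ℝ) 1) (n : ℕ) :
    (fun y => 1 - 1/(y + ((n:ℝ)+1))) '' A ⊆ Set.Ioo (1 - 1/((n:ℝ)+1)) (1 - 1/((n:ℝ)+2)) := by
  rintro _ ⟨y, hy, rfl⟩
  obtain ⟨hy0, hy1⟩ := hA hy
  have hc0 : (0:ℝ) < (n:ℝ)+1 := by positivity
  have h1 : (0:ℝ) < y + ((n:ℝ)+1) := by positivity
  constructor
  · have : 1/(y + ((n:ℝ)+1)) < 1/((n:ℝ)+1) := by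
      apply one_div_lt_one_div_of_lt hc0; linarith
    simp only []; linarith
  · have : 1/((n:ℝ)+2) < 1/(y + ((n:ℝ)+1)) := by
      apply one_div_lt_one_div_of_lt h1; linarith
    simp only []; linarith

lemma renyi_disjoint {A : Set ℝ} (hA : A ⊆ Set.Ioo (0:ℝ) 1) :
    Pairwise (Function.onFun Disjoint
      (fun n : ℕ => (fun y => 1 - 1/(y + ((n:ℝ)+1))) '' A)) := by
  have key : ∀ m n : ℕ, m < n → Disjoint ((fun y => 1 - 1/(y + ((m:ℝ)+1))) '' A)
      ((fun y => 1 - 1/(y + ((n:ℝ)+1))) '' A) := by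
    intro m n h
    apply Set.disjoint_left.2
    intro x hxm hxn
    have h1 := (renyi_image_subset hA m hxm).2
    have h2 := (renyi_image_subset hA n hxn).1
    have hmn' : (m:ℝ) + 2 ≤ (n:ℝ) + 1 := by
      have : (m:ℝ) + 1 ≤ (n:ℝ) := by exact_mod_cast h
      linarith
    have : 1/((n:ℝ)+1) ≤ 1/((m:ℝ)+2) := one_div_le_one_div_of_le (by positivity) hmn'
    linarith
  intro m n hmn
  rcases lt_or_gt_of_ne hmn with h | h
  · exact key m n h
  · exact (key n m h).symm

lemma renyi_decomp {A : Set ℝ} (hA : A ⊆ Set.Ioo (0:ℝ) 1) :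
    renyiMap ⁻¹' A ∩ Set.Ioo (0:ℝ) 1
      = ⋃ n : ℕ, (fun y => 1 - 1/(y + ((n:ℝ)+1))) '' A := by
  ext x
  simp only [Set.mem_inter_iff, Set.mem_preimage, Set.mem_iUnion, Set.mem_image,
    Set.mem_Ioo]
  constructor
  · rintro ⟨hxA, hx0, hx1⟩
    have h1x : 0 < 1 - x := by linarith
    have ht1 : 1 < 1/(1-x) := by rw [lt_div_iff₀ h1x]; linarith
    have hfl : (1:ℤ) ≤ ⌊1/(1-x)⌋ := Int.le_floor.2 (by exact_mod_cast ht1.le)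
    refine ⟨(⌊1/(1-x)⌋ - 1).toNat, renyiMap x, hxA, ?_⟩
    have hcast : (((⌊1/(1-x)⌋ - 1).toNat : ℝ) + 1) = ((⌊1/(1-x)⌋ : ℤ) : ℝ) := by
      have h := Int.toNat_of_nonneg (show (0:ℤ) ≤ ⌊1/(1-x)⌋ - 1 by omega)
      have : ((( ⌊1/(1-x)⌋ - 1).toNat : ℤ) : ℝ) = ((⌊1/(1-x)⌋ : ℤ) : ℝ) - 1 := by
        rw [h]; push_cast; ring
      push_cast at this ⊢
      linarith
    rw [hcast]
    have hsum : renyiMap x + ((⌊1/(1-x)⌋ : ℤ) : ℝ) = 1/(1-x) := by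
      unfold renyiMap; ring
    rw [hsum]
    field_simp
    ring
  · rintro ⟨n, y, hyA, rfl⟩
    obtain ⟨hy0, hy1⟩ := hA hyA
    have h1 : (1:ℝ) < y + ((n:ℝ)+1) := by
      have : (0:ℝ) ≤ (n:ℝ) := Nat.cast_nonneg n
      linarith
    have h0 : (0:ℝ) < y + ((n:ℝ)+1) := by linarith
    have hxlt : 1/(y + ((n:ℝ)+1)) < 1 := by
      rw [div_lt_one h0]; linarith
    have hxpos : 0 < 1/(y + ((n:ℝ)+1)) := by positivity
    have hinv : 1/(1 - (1 - 1/(y + ((n:ℝ)+1)))) = y + ((n:ℝ)+1) := by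
      field_simp
      ring
    have hfloor : ⌊1/(1 - (1 - 1/(y + ((n:ℝ)+1))))⌋ = (n:ℤ) + 1 := by
      rw [hinv, Int.floor_eq_iff]
      constructor
      · push_cast; linarith
      · push_cast; linarith
    refine ⟨?_, by linarith, by linarith⟩
    unfold renyiMap
    rw [hfloor, hinv]
    push_cast
    have : y + ((n:ℝ)+1) - ((n:ℝ)+1) = y := by ring
    rw [this]
    exact hyA

lemma renyi_branch_deriv (n : ℕ) {A : Set ℝ} (hA : A ⊆ Set.Ioo (0:ℝ) 1) :
    ∀ x ∈ A, HasDerivWithinAt (fun y => 1 - 1/(y + ((n:ℝ)+1)))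
      (((x + ((n:ℝ)+1))^2)⁻¹) A x := by
  intro x hx
  obtain ⟨hx0, _⟩ := hA hx
  have h0 : x + ((n:ℝ)+1) ≠ 0 := by positivity
  have h1 : HasDerivAt (fun y : ℝ => y + ((n:ℝ)+1)) 1 x := (hasDerivAt_id x).add_const _
  have h2 := (h1.inv h0).const_sub 1
  have h3 : HasDerivAt (fun y : ℝ => 1 - (y + ((n:ℝ)+1))⁻¹) (((x + ((n:ℝ)+1))^2)⁻¹) x := by
    convert h2 using 1
    all_goals first | rfl | field_simp
  have := h3.hasDerivWithinAt (s := A)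
  simpa [one_div] using this

lemma renyi_branch_inj (n : ℕ) {A : Set ℝ} (hA : A ⊆ Set.Ioo (0:ℝ) 1) :
    Set.InjOn (fun y => 1 - 1/(y + ((n:ℝ)+1))) A := by
  intro a ha b hb h
  simp only at h
  have ha0 : (0:ℝ) < a + ((n:ℝ)+1) := by have := (hA ha).1; positivity
  have hb0 : (0:ℝ) < b + ((n:ℝ)+1) := by have := (hA hb).1; positivity
  have h' : 1/(a + ((n:ℝ)+1)) = 1/(b + ((n:ℝ)+1)) := by linarith
  field_simp at h'
  linarith

lemma renyi_branch_integral (n : ℕ) {A : Set ℝ} (hA : A ⊆ Set.Ioo (0:ℝ) 1)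
    (hAm : MeasurableSet A) :
    ∫⁻ x in (fun y => 1 - 1/(y + ((n:ℝ)+1))) '' A, ENNReal.ofReal (1/x)
      = ∫⁻ y in A, ENNReal.ofReal (1 / ((y + n) * (y + n + 1))) := by
  rw [lintegral_image_1d hAm (renyi_branch_deriv n hA) (renyi_branch_inj n hA)]
  apply setLIntegral_congr_fun hAm
  intro y hy
  dsimp only
  obtain ⟨hy0, hy1⟩ := hA hy
  have h0 : (0:ℝ) < y + ((n:ℝ)+1) := by positivity
  have hn0 : (0:ℝ) < y + (n:ℝ) := by positivity
  have habs : |((y + ((n:ℝ)+1))^2)⁻¹| = ((y + ((n:ℝ)+1))^2)⁻¹ := abs_of_pos (by positivity)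
  rw [habs, ← ENNReal.ofReal_mul (by positivity)]
  congr 1
  have hT : 1 - 1/(y + ((n:ℝ)+1)) = (y + n)/(y + n + 1) := by
    rw [eq_div_iff (by linarith : y + (n:ℝ) + 1 ≠ 0)]
    field_simp
    ring
  rw [hT, one_div_div]
  field_simp
  ring

lemma renyi_lintegral_top :
    ∫⁻ x in Set.Ioo (0:ℝ) 1, ENNReal.ofReal (1/x) = ⊤ := by
  apply ENNReal.eq_top_of_forall_nnreal_le
  intro r
  rcases eq_or_lt_of_le r.coe_nonneg with h0 | h0
  · have : r = 0 := by exact_mod_cast h0.symm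
    simp [this]
  set a : ℝ := Real.exp (-(r:ℝ)) with ha
  have ha0 : 0 < a := Real.exp_pos _
  have ha1 : a < 1 := by
    rw [ha, Real.exp_lt_one_iff]; linarith
  have hInt : IntegrableOn (fun x : ℝ => 1/x) (Set.Ioo a 1) := by
    apply (ContinuousOn.integrableOn_compact isCompact_Icc ?_).mono_set Set.Ioo_subset_Icc_self
    apply ContinuousOn.div continuousOn_const continuousOn_id
    intro x hx
    exact ne_of_gt (lt_of_lt_of_le ha0 hx.1)
  have hval : ∫ x in Set.Ioo a 1, 1/x = (r:ℝ) := by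
    rw [← integral_Ioc_eq_integral_Ioo, ← intervalIntegral.integral_of_le ha1.le]
    rw [integral_one_div]
    · rw [one_div, ha, ← Real.exp_neg, neg_neg, Real.log_exp]
    · intro h
      rcases h with ⟨h1, h2⟩
      simp only [inf_le_iff, le_sup_iff] at h1 h2
      rcases h1 with h | h <;> linarith
  calc (r : ℝ≥0∞) = ENNReal.ofReal (∫ x in Set.Ioo a 1, 1/x) := by
        rw [hval]; simp [ENNReal.ofReal_coe_nnreal]
    _ = ∫⁻ x in Set.Ioo a 1, ENNReal.ofReal (1/x) := by
        apply ofReal_integral_eq_lintegral_ofReal hInt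
        filter_upwards [ae_restrict_mem measurableSet_Ioo] with x hx
        have hx0 : 0 < x := lt_trans ha0 hx.1
        positivity
    _ ≤ _ := lintegral_mono_set (fun x hx =>
        Set.mem_Ioo.2 ⟨lt_trans ha0 (Set.mem_Ioo.1 hx).1, (Set.mem_Ioo.1 hx).2⟩)

lemma renyiMap_measurable : Measurable renyiMap := by
  unfold renyiMap
  apply Measurable.sub
  · exact measurable_const.div (measurable_const.sub measurable_id)
  · exact Measurable.comp (measurable_from_top (α := ℤ))
      (Measurable.floor (measurable_const.div (measurable_const.sub measurable_id)))

/-- The measure with density `1/x` on `(0,1)` is invariant under the Renyi map;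
it is σ-finite but infinite. -/
theorem muRenyi_invariant_sigmaFinite_infinite :
    (∀ A : Set ℝ, A ⊆ Set.Ioo (0:ℝ) 1 → MeasurableSet A →
      muRenyi (renyiMap ⁻¹' A) = muRenyi A) ∧
    SigmaFinite muRenyi ∧ muRenyi (Set.Ioo (0:ℝ) 1) = ⊤ := by
  refine ⟨?_, ?_, ?_⟩
  · intro A hA hAm
    have hpre : MeasurableSet (renyiMap ⁻¹' A) := renyiMap_measurable hAm
    have hmeas : ∀ n : ℕ, MeasurableSet ((fun y => 1 - 1/(y + ((n:ℝ)+1))) '' A) :=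
      fun n => measurable_image_1d hAm (renyi_branch_deriv n hA) (renyi_branch_inj n hA)
    rw [muRenyi, withDensity_apply _ hpre, withDensity_apply _ hAm,
        Measure.restrict_restrict hpre, Measure.restrict_restrict hAm,
        Set.inter_eq_self_of_subset_left hA, renyi_decomp hA,
        lintegral_iUnion hmeas (renyi_disjoint hA)]
    rw [tsum_congr (fun n => renyi_branch_integral n hA hAm)]
    rw [← lintegral_tsum (μ := volume.restrict A)
      (f := fun (n : ℕ) (y : ℝ) => ENNReal.ofReal (1 / ((y + n) * (y + n + 1))))
      (fun n => (Measurable.ennreal_ofReal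
      (measurable_const.div ((measurable_id.add_const ((n:ℝ))).mul
        ((measurable_id.add_const ((n:ℝ))).add_const 1)))).aemeasurable)]
    apply setLIntegral_congr_fun hAm
    intro y hy
    exact renyi_tsum y (hA hy).1
  · exact SigmaFinite.withDensity_ofReal _
  · rw [muRenyi, withDensity_apply _ measurableSet_Ioo,
        Measure.restrict_restrict measurableSet_Ioo, Set.inter_self]
    exact renyi_lintegral_top
end

section
/- The integral of log|G'| with respect to the Gauss measure equals π²/(6 log 2); that is, (1/log 2) ∫₀¹ (-2 log x)/(1+x) dx = π²/(6 log 2). -/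
open MeasureTheory Real Set

/-- Antiderivative used for `∫ x^n (-log x)`. -/
noncomputable def gaussAux (n : ℕ) (x : ℝ) : ℝ :=
  x ^ (n + 1) / ((n : ℝ) + 1) ^ 2 - x ^ n * (x * Real.log x) / ((n : ℝ) + 1)

lemma gaussAux_contOn (n : ℕ) : ContinuousOn (gaussAux n) (Icc 0 1) := by
  apply Continuous.continuousOn
  unfold gaussAux
  fun_prop (disch := positivity)

lemma gaussAux_hasDeriv (n : ℕ) {x : ℝ} (hx : x ∈ Ioo (0:ℝ) 1) :
    HasDerivAt (gaussAux n) (x ^ n * (-Real.log x)) x := by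
  have hx0 : x ≠ 0 := ne_of_gt hx.1
  have h1 : HasDerivAt (fun y : ℝ => y * Real.log y) (Real.log x + 1) x := by
    have := (hasDerivAt_id' x).mul (Real.hasDerivAt_log hx0)
    refine this.congr_deriv ?_
    rw [mul_inv_cancel₀ hx0]; ring
  have h2 : HasDerivAt (fun y : ℝ => y ^ n * (y * Real.log y))
      (x ^ n * (((n : ℝ) + 1) * Real.log x + 1)) x := by
    refine ((hasDerivAt_pow n x).mul h1).congr_deriv ?_
    symm
    rcases n with _ | m
    · simp
    · have hxp : x ^ m * x = x ^ (m + 1) := (pow_succ x m).symm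
      push_cast
      linear_combination (-((m : ℝ) + 1) * Real.log x) * hxp
  have h3 : HasDerivAt (fun y : ℝ => y ^ (n + 1) / ((n : ℝ) + 1) ^ 2)
      (((n : ℝ) + 1) * x ^ n / ((n : ℝ) + 1) ^ 2) x := by
    have := (hasDerivAt_pow (n + 1) x).div_const (((n : ℝ) + 1) ^ 2)
    simpa [Nat.cast_add] using this
  have := h3.sub (h2.div_const ((n : ℝ) + 1))
  refine this.congr_deriv ?_
  symm
  have hn : ((n : ℝ) + 1) ≠ 0 := by positivity
  field_simp
  ring

lemma pow_neg_log_nonneg {n : ℕ} {x : ℝ} (hx : x ∈ Ioo (0:ℝ) 1) :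
    0 ≤ x ^ n * (-Real.log x) := by
  have := Real.log_nonpos (le_of_lt hx.1) (le_of_lt hx.2)
  have hxn : (0:ℝ) ≤ x ^ n := pow_nonneg (le_of_lt hx.1) n
  nlinarith

lemma integrableOn_pow_neg_log (n : ℕ) :
    IntegrableOn (fun x : ℝ => x ^ n * (-Real.log x)) (Ioo 0 1) := by
  have := intervalIntegral.integrableOn_deriv_of_nonneg (gaussAux_contOn n)
      (fun x hx => gaussAux_hasDeriv n hx) (fun x hx => pow_neg_log_nonneg hx)
  exact this.mono_set Ioo_subset_Ioc_self

lemma integral_pow_neg_log (n : ℕ) :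
    ∫ x in Ioo (0:ℝ) 1, x ^ n * (-Real.log x) = 1 / ((n : ℝ) + 1) ^ 2 := by
  have hInt : IntervalIntegrable (fun x : ℝ => x ^ n * (-Real.log x)) volume 0 1 := by
    rw [intervalIntegrable_iff_integrableOn_Ioo_of_le zero_le_one]
    exact integrableOn_pow_neg_log n
  have := intervalIntegral.integral_eq_sub_of_hasDerivAt_of_le zero_le_one
      (gaussAux_contOn n) (fun x hx => gaussAux_hasDeriv n hx) hInt
  rw [intervalIntegral.integral_of_le zero_le_one, MeasureTheory.integral_Ioc_eq_integral_Ioo]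
    at this
  rw [this]
  simp [gaussAux]

lemma hasSum_alt : HasSum (fun n : ℕ => (-1:ℝ) ^ n / ((n : ℝ) + 1) ^ 2)
    (Real.pi ^ 2 / 12) := by
  have hζ : HasSum (fun n : ℕ => 1 / ((n : ℝ)) ^ 2) (Real.pi ^ 2 / 6) := hasSum_zeta_two
  have ha : HasSum (fun n : ℕ => 1 / ((n : ℝ) + 1) ^ 2) (Real.pi ^ 2 / 6) := by
    have h0 : HasSum (fun n : ℕ => 1 / ((n : ℝ)) ^ 2)
        (Real.pi ^ 2 / 6 + ∑ i ∈ Finset.range 1, 1 / ((i : ℝ)) ^ 2) := by simpa using hζ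
    have := (hasSum_nat_add_iff (f := fun n : ℕ => 1 / ((n : ℝ)) ^ 2) 1).2 h0
    simpa using this
  set c : ℕ → ℝ := fun n => if Even n then 0 else 1 / ((n : ℝ) + 1) ^ 2 with hc
  have hcsum : HasSum c (Real.pi ^ 2 / 24) := by
    have hinj : Function.Injective (fun k : ℕ => 2 * k + 1) := by
      intro a b h; dsimp at h; omega
    rw [← hinj.hasSum_iff]
    · have : (c ∘ fun k : ℕ => 2 * k + 1) = fun k : ℕ => (1/4) * (1 / ((k : ℝ) + 1) ^ 2) := by
        funext k
        simp only [Function.comp, hc, Nat.even_add_one, Nat.even_mul]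
        rw [if_neg (by simp [parity_simps])]
        push_cast
        field_simp
        ring
      rw [this]
      have := ha.mul_left (1/4)
      convert this using 1 <;> first | rfl | ring
    · intro m hm
      have hev : Even m := by
        by_contra hodd
        obtain ⟨k, hk⟩ := Nat.not_even_iff_odd.1 hodd
        exact hm ⟨k, by dsimp; omega⟩
      simp [hc, hev]
  have key : (fun n : ℕ => (-1:ℝ) ^ n / ((n : ℝ) + 1) ^ 2)
      = fun n : ℕ => 1 / ((n : ℝ) + 1) ^ 2 - 2 * c n := by
    funext n
    rcases Nat.even_or_odd n with he | ho
    · simp [hc, he, he.neg_one_pow]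
    · have : ¬ Even n := Nat.not_even_iff_odd.2 ho
      simp [hc, this, ho.neg_one_pow]
      ring
  rw [key]
  have := ha.sub (hcsum.mul_left 2)
  convert this using 1 <;> first | rfl | ring

lemma integral_neg_log_div : ∫ x in Ioo (0:ℝ) 1, (-Real.log x) / (1 + x)
    = Real.pi ^ 2 / 12 := by
  set F : ℕ → ℝ → ℝ := fun n x => (-1:ℝ) ^ n * (x ^ n * (-Real.log x)) with hF
  have hFint : ∀ n, Integrable (F n) (volume.restrict (Ioo (0:ℝ) 1)) := by
    intro n
    have h := (integrableOn_pow_neg_log n).const_mul ((-1:ℝ) ^ n)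
    exact h
  have hnorm : ∀ n, ∫ x in Ioo (0:ℝ) 1, ‖F n x‖ = 1 / ((n : ℝ) + 1) ^ 2 := by
    intro n
    rw [← integral_pow_neg_log n]
    apply setIntegral_congr_fun measurableSet_Ioo
    intro x hx
    simp only [hF, norm_mul, norm_pow, norm_neg, norm_one, one_pow, one_mul]
    rw [Real.norm_eq_abs, Real.norm_eq_abs, abs_of_pos hx.1,
      abs_of_nonpos (Real.log_nonpos hx.1.le hx.2.le)]
  have hsummable : Summable (fun n : ℕ => ∫ x in Ioo (0:ℝ) 1, ‖F n x‖) := by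
    simp_rw [hnorm]
    have hζ : HasSum (fun n : ℕ => 1 / ((n : ℝ)) ^ 2) (Real.pi ^ 2 / 6) := hasSum_zeta_two
    have h0 : HasSum (fun n : ℕ => 1 / ((n : ℝ)) ^ 2)
        (Real.pi ^ 2 / 6 + ∑ i ∈ Finset.range 1, 1 / ((i : ℝ)) ^ 2) := by simpa using hζ
    have := (hasSum_nat_add_iff (f := fun n : ℕ => 1 / ((n : ℝ)) ^ 2) 1).2 h0
    exact (by simpa using this : HasSum (fun n : ℕ => 1 / ((n : ℝ) + 1) ^ 2) _).summable
  have hinter := MeasureTheory.integral_tsum_of_summable_integral_norm hFint hsummable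
  have hleft : ∑' n, ∫ x in Ioo (0:ℝ) 1, F n x = Real.pi ^ 2 / 12 := by
    have : ∀ n, ∫ x in Ioo (0:ℝ) 1, F n x = (-1:ℝ) ^ n / ((n : ℝ) + 1) ^ 2 := by
      intro n
      rw [hF]
      simp only
      rw [MeasureTheory.integral_const_mul, integral_pow_neg_log n]
      rw [mul_one_div]
    simp_rw [this]
    exact hasSum_alt.tsum_eq
  have hright : ∫ x in Ioo (0:ℝ) 1, (∑' n, F n x)
      = ∫ x in Ioo (0:ℝ) 1, (-Real.log x) / (1 + x) := by
    apply setIntegral_congr_fun measurableSet_Ioo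
    intro x hx
    have hxlt : ‖-x‖ < 1 := by
      rw [norm_neg, Real.norm_eq_abs, abs_of_pos hx.1]; exact hx.2
    have hgeo : ∑' n : ℕ, (-x) ^ n = (1 - -x)⁻¹ := tsum_geometric_of_norm_lt_one hxlt
    have heq : ∀ n : ℕ, F n x = (-x) ^ n * (-Real.log x) := by
      intro n
      simp only [hF]
      rw [neg_pow]
      ring
    simp_rw [heq]
    rw [tsum_mul_right, hgeo]
    rw [sub_neg_eq_add, div_eq_mul_inv, mul_comm]
  rw [← hright, ← hinter, hleft]

/-- The integral of `log |G'|` with respect to the Gauss measure equals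
`π²/(6 log 2)`: `(1/log 2) ∫₀¹ (-2 log x)/(1+x) dx = π²/(6 log 2)`. -/
theorem gauss_lyapunov_integral :
    (1 / Real.log 2) * ∫ x in Set.Ioo (0:ℝ) 1, (-2 * Real.log x) / (1 + x) =
      Real.pi ^ 2 / (6 * Real.log 2) := by
  have h2 : ∫ x in Set.Ioo (0:ℝ) 1, (-2 * Real.log x) / (1 + x)
      = 2 * ∫ x in Set.Ioo (0:ℝ) 1, (-Real.log x) / (1 + x) := by
    rw [← MeasureTheory.integral_const_mul]
    congr 1
    funext x
    ring
  rw [h2, integral_neg_log_div]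
  have hlog : Real.log 2 ≠ 0 := ne_of_gt (Real.log_pos one_lt_two)
  field_simp
  ring
end
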